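/- (Infeasibility of single-database SPIR.) For K ≥ 2 messages, L ≥ 1, and a single database (N = 1), no zero-error SPIR scheme exists: there are no random variables (W_1, …, W_K, S, F, Q_1^{[k]}, A_1^{[k]}) as in the SPIR model that simultaneously satisfy the correctness, user-privacy and database-privacy constraints. -/

import Mathlib

open Finset

attribute [local instance] Classical.propDecidable

/-- Probability that the random variable `X` takes the value `a`, on a finite
sample space `Ω` with probability mass function `p`. -/
noncomputable def prob {Ω α : Type*} [Fintype Ω] (p : Ω → ℝ) (X : Ω → α) (a : α) : ℝ :=
  ∑ ω : Ω, if X ω = a then p ω else 0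

/-- Shannon entropy (in bits) of the random variable `X`. -/
noncomputable def ent {Ω α : Type*} [Fintype Ω] [Fintype α] (p : Ω → ℝ) (X : Ω → α) : ℝ :=
  - ∑ a : α, prob p X a * Real.logb 2 (prob p X a)

/-- Conditional Shannon entropy (in bits) `H(X | Y)`. -/
noncomputable def condEnt {Ω α β : Type*} [Fintype Ω] [Fintype α] [Fintype β]
    (p : Ω → ℝ) (X : Ω → α) (Y : Ω → β) : ℝ :=
  ent p (fun ω => (X ω, Y ω)) - ent p Y

/-- Shannon mutual information (in bits) `I(X ; Y)`. -/
noncomputable def mutInfo {Ω α β : Type*} [Fintype Ω] [Fintype α] [Fintype β]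
    (p : Ω → ℝ) (X : Ω → α) (Y : Ω → β) : ℝ :=
  ent p X + ent p Y - ent p (fun ω => (X ω, Y ω))

/-- `X` and `Y` are identically distributed. -/
def IdentDist {Ω α : Type*} [Fintype Ω] (p : Ω → ℝ) (X Y : Ω → α) : Prop :=
  ∀ a : α, prob p X a = prob p Y a

/-- `X` is uniformly distributed on `α`. -/
def Unif {Ω α : Type*} [Fintype Ω] [Fintype α] (p : Ω → ℝ) (X : Ω → α) : Prop :=
  ∀ a : α, prob p X a = 1 / (Fintype.card α : ℝ)

/-- A zero-error SPIR scheme with `K` messages of `L` bits each and a *single* database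
(`N = 1`): a finite probability space carrying the messages `W_1, …, W_K` (uniform on
`L`-bit strings), the common randomness `S`, the user randomness `F` (all mutually
independent), a query `Q_1^[k]` that is a deterministic function of `F`, and an answer
`A_1^[k]` that is a deterministic function of `(Q_1^[k], W_1, …, W_K, S)`, satisfying
correctness, user-privacy and database-privacy. -/
structure SingleDBSPIR (K L : ℕ) where
  /-- the finite sample space -/
  Ω : Type
  [instΩ : Fintype Ω]
  /-- the probability mass function -/
  p : Ω → ℝ
  p_nonneg : ∀ ω, 0 ≤ p ω
  p_sum : ∑ ω : Ω, p ω = 1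
  /-- value type of the common randomness -/
  𝓢 : Type
  [inst𝓢 : Fintype 𝓢]
  /-- value type of the user randomness -/
  𝓕 : Type
  [inst𝓕 : Fintype 𝓕]
  /-- value type of the query -/
  𝓠 : Type
  [inst𝓠 : Fintype 𝓠]
  /-- value type of the answer -/
  𝓐 : Type
  [inst𝓐 : Fintype 𝓐]
  /-- the messages -/
  W : Fin K → Ω → (Fin L → ZMod 2)
  /-- the common randomness -/
  S : Ω → 𝓢
  /-- the user randomness -/
  F : Ω → 𝓕
  /-- the query `Q_1^[k]` for desired message index `k` -/
  Q : Fin K → Ω → 𝓠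
  /-- the answer `A_1^[k]` for desired message index `k` -/
  A : Fin K → Ω → 𝓐
  /-- each message is uniformly distributed on the set of `L`-bit strings -/
  hWunif : ∀ k, Unif p (W k)
  /-- the messages, the common randomness and the user randomness are mutually
  independent -/
  hIndep : ∀ (w : ∀ _ : Fin K, Fin L → ZMod 2) (s : 𝓢) (f : 𝓕),
    prob p (fun ω => ((fun k => W k ω), S ω, F ω)) (w, s, f)
      = (∏ k, prob p (W k) (w k)) * prob p S s * prob p F f
  /-- the query is a deterministic function of `F` -/
  hQ : ∀ k, ∃ g : 𝓕 → 𝓠, ∀ ω, Q k ω = g (F ω)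
  /-- the answer is a deterministic function of the query, the messages and `S` -/
  hA : ∀ k, ∃ g : 𝓠 → (∀ _ : Fin K, Fin L → ZMod 2) → 𝓢 → 𝓐,
    ∀ ω, A k ω = g (Q k ω) (fun j => W j ω) (S ω)
  /-- correctness: `W_k` is a deterministic function of `(A_1^[k], F)` -/
  hCorrect : ∀ k, ∃ g : 𝓐 → 𝓕 → (Fin L → ZMod 2),
    ∀ ω, W k ω = g (A k ω) (F ω)
  /-- user-privacy -/
  hUserPriv : ∀ k k' : Fin K,
    IdentDist p (fun ω => (Q k ω, A k ω, (fun j => W j ω), S ω))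
                (fun ω => (Q k' ω, A k' ω, (fun j => W j ω), S ω))
  /-- database-privacy -/
  hDBPriv : ∀ k : Fin K,
    mutInfo p (fun ω => (fun j : {j : Fin K // j ≠ k} => W j.1 ω))
      (fun ω => (Q k ω, A k ω, F ω)) = 0

attribute [instance] SingleDBSPIR.instΩ SingleDBSPIR.inst𝓢 SingleDBSPIR.inst𝓕
  SingleDBSPIR.inst𝓠 SingleDBSPIR.inst𝓐

section Helpers

variable {Ω α β : Type*} [Fintype Ω]

lemma prob_nonneg (p : Ω → ℝ) (hp : ∀ ω, 0 ≤ p ω) (X : Ω → α) (a : α) :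
    0 ≤ prob p X a :=
  Finset.sum_nonneg fun ω _ => by split_ifs; exacts [hp ω, le_rfl]

lemma sum_prob [Fintype α] (p : Ω → ℝ) (X : Ω → α) :
    ∑ a : α, prob p X a = ∑ ω, p ω := by
  simp only [prob]
  rw [Finset.sum_comm]
  refine Finset.sum_congr rfl fun ω _ => ?_
  simp [Finset.sum_ite_eq]

lemma prob_fst [Fintype β] (p : Ω → ℝ) (X : Ω → α) (Y : Ω → β) (x : α) :
    prob p X x = ∑ y : β, prob p (fun ω => (X ω, Y ω)) (x, y) := by
  simp only [prob, Prod.mk.injEq]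
  rw [Finset.sum_comm]
  refine Finset.sum_congr rfl fun ω _ => ?_
  by_cases h : X ω = x
  · simp [h, Finset.sum_ite_eq]
  · simp [h]

lemma prob_snd [Fintype α] (p : Ω → ℝ) (X : Ω → α) (Y : Ω → β) (y : β) :
    prob p Y y = ∑ x : α, prob p (fun ω => (X ω, Y ω)) (x, y) := by
  simp only [prob, Prod.mk.injEq]
  rw [Finset.sum_comm]
  refine Finset.sum_congr rfl fun ω _ => ?_
  by_cases h : Y ω = y
  · simp [h, Finset.sum_ite_eq]
  · simp [h]

lemma exists_of_prob_pos (p : Ω → ℝ) (hp : ∀ ω, 0 ≤ p ω) (X : Ω → α) (a : α)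
    (h : 0 < prob p X a) : ∃ ω, X ω = a ∧ 0 < p ω := by
  by_contra hc
  push_neg at hc
  refine absurd h (not_lt.2 (Finset.sum_nonpos fun ω _ => ?_))
  split_ifs with hX
  · rcases (hp ω).lt_or_eq with h1 | h1
    · exact absurd h1 (not_lt.2 (hc ω hX))
    · exact h1.ge
  · exact le_rfl

lemma single_le_prob (p : Ω → ℝ) (hp : ∀ ω, 0 ≤ p ω) (X : Ω → α) (ω0 : Ω) :
    p ω0 ≤ prob p X (X ω0) := by
  have h := Finset.single_le_sum (f := fun ω => if X ω = X ω0 then p ω else 0)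
    (fun ω _ => by split_ifs; exacts [hp ω, le_rfl]) (Finset.mem_univ ω0)
  rw [if_pos rfl] at h
  exact h

end Helpers

section Gibbs

variable {Ω α β : Type*} [Fintype Ω] [Fintype α] [Fintype β]

lemma mutInfo_pos (p : Ω → ℝ) (hp : ∀ ω, 0 ≤ p ω) (hs : ∑ ω, p ω = 1)
    (X : Ω → α) (Y : Ω → β) (x0 : α) (y0 : β)
    (h0 : prob p (fun ω => (X ω, Y ω)) (x0, y0) = 0)
    (hx : 0 < prob p X x0) (hy : 0 < prob p Y y0) :
    0 < mutInfo p X Y := by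
  set XY := fun ω => (X ω, Y ω) with hXY_def
  have hXYnn : ∀ z, 0 ≤ prob p XY z := fun z => prob_nonneg p hp XY z
  have hXnn : ∀ x, 0 ≤ prob p X x := fun x => prob_nonneg p hp X x
  have hYnn : ∀ y, 0 ≤ prob p Y y := fun y => prob_nonneg p hp Y y
  have hsumXY : ∑ z : α × β, prob p XY z = 1 := by rw [sum_prob, hs]
  have hsumX : ∑ x : α, prob p X x = 1 := by rw [sum_prob, hs]
  have hsumY : ∑ y : β, prob p Y y = 1 := by rw [sum_prob, hs]
  have hleX : ∀ z : α × β, prob p XY z ≤ prob p X z.1 := fun z => by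
    rw [prob_fst p X Y z.1]
    exact Finset.single_le_sum (fun y _ => hXYnn (z.1, y)) (Finset.mem_univ z.2)
  have hleY : ∀ z : α × β, prob p XY z ≤ prob p Y z.2 := fun z => by
    rw [prob_snd p X Y z.2]
    exact Finset.single_le_sum (fun x _ => hXYnn (x, z.2)) (Finset.mem_univ z.1)
  have e1 : ∑ x : α, prob p X x * Real.logb 2 (prob p X x)
      = ∑ z : α × β, prob p XY z * Real.logb 2 (prob p X z.1) := by
    rw [Fintype.sum_prod_type]
    refine Finset.sum_congr rfl fun x _ => ?_
    dsimp only
    rw [← Finset.sum_mul]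
    exact congrArg (· * Real.logb 2 (prob p X x)) (prob_fst p X Y x)
  have e2 : ∑ y : β, prob p Y y * Real.logb 2 (prob p Y y)
      = ∑ z : α × β, prob p XY z * Real.logb 2 (prob p Y z.2) := by
    rw [Fintype.sum_prod_type, Finset.sum_comm]
    refine Finset.sum_congr rfl fun y _ => ?_
    dsimp only
    rw [← Finset.sum_mul]
    exact congrArg (· * Real.logb 2 (prob p Y y)) (prob_snd p X Y y)
  have key : mutInfo p X Y = ∑ z : α × β,
      (prob p XY z * Real.logb 2 (prob p XY z)
        - prob p XY z * Real.logb 2 (prob p X z.1)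
        - prob p XY z * Real.logb 2 (prob p Y z.2)) := by
    simp only [mutInfo, ent, ← hXY_def]
    rw [e1, e2, Finset.sum_sub_distrib, Finset.sum_sub_distrib]
    ring
  have hlog2 : (0:ℝ) < Real.log 2 := Real.log_pos one_lt_two
  have bound : ∀ z : α × β,
      (prob p XY z - (if 0 < prob p XY z then prob p X z.1 * prob p Y z.2 else 0))
          / Real.log 2
        ≤ prob p XY z * Real.logb 2 (prob p XY z)
            - prob p XY z * Real.logb 2 (prob p X z.1)
            - prob p XY z * Real.logb 2 (prob p Y z.2) := by
    intro z
    rcases (hXYnn z).lt_or_eq with hz | hz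
    · rw [if_pos hz]
      have hpX : 0 < prob p X z.1 := lt_of_lt_of_le hz (hleX z)
      have hpY : 0 < prob p Y z.2 := lt_of_lt_of_le hz (hleY z)
      have hT : prob p XY z * Real.logb 2 (prob p XY z)
            - prob p XY z * Real.logb 2 (prob p X z.1)
            - prob p XY z * Real.logb 2 (prob p Y z.2)
          = (prob p XY z * Real.log (prob p XY z)
              - prob p XY z * Real.log (prob p X z.1)
              - prob p XY z * Real.log (prob p Y z.2)) / Real.log 2 := by
        simp only [Real.logb]
        ring
      rw [hT, div_le_div_iff_of_pos_right hlog2]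
      set r := prob p X z.1 * prob p Y z.2 / prob p XY z with hr_def
      have hr : 0 < r := by positivity
      have h1 : Real.log r ≤ r - 1 := Real.log_le_sub_one_of_pos hr
      have h2 : prob p XY z * Real.log r ≤ prob p XY z * (r - 1) :=
        mul_le_mul_of_nonneg_left h1 hz.le
      have hlogr : Real.log r = Real.log (prob p X z.1) + Real.log (prob p Y z.2)
          - Real.log (prob p XY z) := by
        rw [hr_def, Real.log_div (by positivity) hz.ne', Real.log_mul hpX.ne' hpY.ne']
      have h4 : prob p XY z * r = prob p X z.1 * prob p Y z.2 := by
        rw [hr_def, mul_comm]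
        exact div_mul_cancel₀ _ hz.ne'
      nlinarith [h2, hlogr, h4]
    · rw [if_neg (by rw [← hz]; exact lt_irrefl 0), ← hz]
      norm_num
  have hfilter : (Finset.univ.filter (fun z : α × β => 0 < prob p XY z))
      ⊆ Finset.univ.erase (x0, y0) := by
    intro z hz
    rw [Finset.mem_filter] at hz
    refine Finset.mem_erase.2 ⟨?_, Finset.mem_univ z⟩
    intro hzz
    rw [hzz, h0] at hz
    exact lt_irrefl 0 hz.2
  have hprod1 : ∑ z : α × β, prob p X z.1 * prob p Y z.2 = 1 := by
    rw [Fintype.sum_prod_type]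
    simp only [← Finset.mul_sum, hsumY, mul_one, hsumX]
  have herase : ∑ z ∈ Finset.univ.erase (x0, y0), prob p X z.1 * prob p Y z.2
      = 1 - prob p X x0 * prob p Y y0 := by
    have := Finset.sum_erase_add Finset.univ
      (fun z : α × β => prob p X z.1 * prob p Y z.2) (Finset.mem_univ (x0, y0))
    rw [hprod1] at this
    dsimp only at this
    linarith [this]
  have hBsum : ∑ z : α × β,
      (prob p XY z - (if 0 < prob p XY z then prob p X z.1 * prob p Y z.2 else 0))
      ≥ prob p X x0 * prob p Y y0 := by
    rw [Finset.sum_sub_distrib, hsumXY]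
    have : ∑ z : α × β, (if 0 < prob p XY z then prob p X z.1 * prob p Y z.2 else 0)
        = ∑ z ∈ Finset.univ.filter (fun z : α × β => 0 < prob p XY z),
            prob p X z.1 * prob p Y z.2 := (Finset.sum_filter _ _).symm
    rw [this]
    have hle := Finset.sum_le_sum_of_subset_of_nonneg hfilter
      (fun z _ _ => mul_nonneg (hXnn z.1) (hYnn z.2))
    rw [herase] at hle
    linarith
  have hsumT : prob p X x0 * prob p Y y0 / Real.log 2 ≤ mutInfo p X Y := by
    rw [key]
    calc prob p X x0 * prob p Y y0 / Real.log 2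
        ≤ (∑ z : α × β, (prob p XY z
            - (if 0 < prob p XY z then prob p X z.1 * prob p Y z.2 else 0))) / Real.log 2 := by
          exact (div_le_div_iff_of_pos_right hlog2).2 hBsum
      _ ≤ _ := by
          rw [Finset.sum_div]
          exact Finset.sum_le_sum fun z _ => bound z
  exact lt_of_lt_of_le (by positivity) hsumT

end Gibbs

private lemma ifcg {c d : Prop} {ic : Decidable c} {idd : Decidable d} {x y : ℝ}
    (h : c ↔ d) : (@ite _ c ic x y) = (@ite _ d idd x y) := by
  have hcd : c = d := propext h
  subst hcd
  rw [Subsingleton.elim ic idd]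

private lemma ite_sum_zero {ι : Type*} [Fintype ι] (c : Prop) [Decidable c] (g : ι → ℝ) :
    (if c then ∑ i, g i else 0) = ∑ i, if c then g i else 0 := by
  split_ifs <;> simp

/-- (Infeasibility of single-database SPIR.) For `K ≥ 2` messages of
`L ≥ 1` bits and a single database, no zero-error SPIR scheme exists. -/
theorem single_database_spir_infeasible (K L : ℕ) (hK : 2 ≤ K) (hL : 1 ≤ L) :
    IsEmpty (SingleDBSPIR K L) := by
  constructor
  intro P
  obtain ⟨Ω, p, hp, hps, 𝓢, 𝓕, 𝓠, 𝓐, W, S, F, Q, A,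
    hWunif, hIndep, hQall, hAall, hCorr, hUP, hDBP⟩ := P
  choose gQ hgQ using hQall
  choose gA hgA using hAall
  choose gC hgC using hCorr
  have pWpos : ∀ w : Fin K → (Fin L → ZMod 2), 0 < ∏ j, prob p (W j) (w j) := by
    intro w
    refine Finset.prod_pos fun j _ => ?_
    rw [hWunif j (w j)]
    have : (0:ℝ) < (Fintype.card (Fin L → ZMod 2) : ℝ) := by exact_mod_cast Fintype.card_pos
    positivity
  -- the joint law of `(Q k, A k, W, S)`
  have jointA : ∀ (k : Fin K) (q : 𝓠) (a : 𝓐) (w : Fin K → (Fin L → ZMod 2)) (s : 𝓢),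
      prob p (fun ω => (Q k ω, A k ω, (fun j => W j ω), S ω)) (q, a, w, s)
        = if gA k q w s = a then
            (∏ j, prob p (W j) (w j)) * prob p S s *
              (∑ f, if gQ k f = q then prob p F f else 0)
          else 0 := by
    intro k q a w s
    have step1 : prob p (fun ω => (Q k ω, A k ω, (fun j => W j ω), S ω)) (q, a, w, s)
        = ∑ ω, if ((fun j => W j ω) = w ∧ S ω = s ∧ gQ k (F ω) = q) ∧ gA k q w s = a
            then p ω else 0 := by
      refine Finset.sum_congr rfl fun ω _ => ifcg ?_
      simp only [Prod.mk.injEq]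
      constructor
      · rintro ⟨h1, h2, h3, h4⟩
        rw [hgQ k ω] at h1
        refine ⟨⟨h3, h4, h1⟩, ?_⟩
        rw [← h2, hgA k ω, hgQ k ω, h1, h3, h4]
      · rintro ⟨⟨h3, h4, h1⟩, h2⟩
        refine ⟨by rw [hgQ k ω]; exact h1, ?_, h3, h4⟩
        rw [hgA k ω, hgQ k ω, h1, h3, h4, h2]
    rw [step1]
    by_cases hc : gA k q w s = a
    · rw [if_pos hc]
      simp only [hc, and_true]
      have hpush : ∀ f : 𝓕, (if gQ k f = q then
            prob p (fun ω => ((fun j => W j ω), S ω, F ω)) (w, s, f) else 0)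
          = ∑ ω, if (fun j => W j ω) = w ∧ S ω = s ∧ F ω = f ∧ gQ k f = q
              then p ω else 0 := by
        intro f
        by_cases hq : gQ k f = q
        · rw [if_pos hq, prob]
          refine Finset.sum_congr rfl fun ω _ => ifcg ?_
          simp only [Prod.mk.injEq]
          tauto
        · rw [if_neg hq]
          exact (Finset.sum_eq_zero fun ω _ => by rw [if_neg (by tauto)]).symm
      have step3 : (∑ f : 𝓕, if gQ k f = q then
            prob p (fun ω => ((fun j => W j ω), S ω, F ω)) (w, s, f) else 0)
          = ∑ ω, if (fun j => W j ω) = w ∧ S ω = s ∧ gQ k (F ω) = q then p ω else 0 := by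
        rw [Finset.sum_congr rfl fun f _ => hpush f, Finset.sum_comm]
        refine Finset.sum_congr rfl fun ω _ => ?_
        rw [Finset.sum_eq_single (F ω)]
        · by_cases h3 : (fun j => W j ω) = w
          · by_cases h4 : S ω = s
            · by_cases h1 : gQ k (F ω) = q
              · simp [h3, h4, h1]
              · simp [h3, h4, h1]
            · simp [h4]
          · simp [h3]
        · intro f _ hf
          rw [if_neg (by tauto)]
        · intro h
          exact absurd (Finset.mem_univ (F ω)) h
      rw [← step3]
      rw [Finset.mul_sum]
      refine Finset.sum_congr rfl fun f _ => ?_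
      rw [hIndep w s f]
      split_ifs <;> ring
    · rw [if_neg hc]
      refine Finset.sum_eq_zero fun ω _ => ?_
      rw [if_neg (by tauto)]
  -- a positive-probability sample point
  obtain ⟨ω0, hω0⟩ : ∃ ω0, 0 < p ω0 := by
    by_contra hc
    push_neg at hc
    have h1 : ∑ ω, p ω ≤ 0 := Finset.sum_nonpos fun ω _ => hc ω
    rw [hps] at h1
    linarith
  set k : Fin K := ⟨0, by omega⟩ with hkdef
  set k' : Fin K := ⟨1, by omega⟩ with hk'def
  have hkk' : k' ≠ k := by
    simp [hkdef, hk'def, Fin.ext_iff]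
  -- β k (Q k ω0) is positive
  have hβk : 0 < ∑ f, if gQ k f = Q k ω0 then prob p F f else 0 := by
    have h1 : p ω0 ≤ prob p F (F ω0) := single_le_prob p hp F ω0
    have h2 : prob p F (F ω0) ≤ ∑ f, if gQ k f = Q k ω0 then prob p F f else 0 := by
      have h3 := Finset.single_le_sum
        (f := fun f => if gQ k f = Q k ω0 then prob p F f else 0)
        (fun f _ => by split_ifs; exacts [prob_nonneg p hp F f, le_rfl])
        (Finset.mem_univ (F ω0))
      rwa [if_pos (hgQ k ω0).symm] at h3
    linarith
  -- user-privacy consequences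
  have factV : ∀ (j j' : Fin K) (q : 𝓠) (w : Fin K → (Fin L → ZMod 2)) (s : 𝓢),
      0 < (∑ f, if gQ j f = q then prob p F f else 0) → 0 < prob p S s →
      gA j' q w s = gA j q w s ∧
        (∑ f, if gQ j' f = q then prob p F f else 0)
          = ∑ f, if gQ j f = q then prob p F f else 0 := by
    intro j j' q w s hβj hS
    have hU := hUP j j' (q, gA j q w s, w, s)
    rw [jointA j, jointA j', if_pos rfl] at hU
    have hpos : 0 < (∏ i, prob p (W i) (w i)) * prob p S s *
        (∑ f, if gQ j f = q then prob p F f else 0) :=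
      mul_pos (mul_pos (pWpos w) hS) hβj
    by_cases h : gA j' q w s = gA j q w s
    · rw [if_pos h] at hU
      refine ⟨h, ?_⟩
      have hne : ((∏ i, prob p (W i) (w i)) * prob p S s) ≠ 0 :=
        ne_of_gt (mul_pos (pWpos w) hS)
      exact (mul_left_cancel₀ hne hU).symm
    · rw [if_neg h] at hU
      rw [hU] at hpos
      exact absurd hpos (lt_irrefl 0)
  have hS0 : 0 < prob p S (S ω0) := lt_of_lt_of_le hω0 (single_le_prob p hp S ω0)
  have hβk' : 0 < ∑ f, if gQ k' f = Q k ω0 then prob p F f else 0 := by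
    rw [(factV k k' (Q k ω0) (fun _ _ => 0) (S ω0) hβk hS0).2]
    exact hβk
  obtain ⟨f1, hf1q, hf1pos⟩ : ∃ f, gQ k' f = Q k ω0 ∧ 0 < prob p F f := by
    by_contra hc
    push_neg at hc
    refine absurd hβk' (not_lt.2 (Finset.sum_nonpos fun f _ => ?_))
    split_ifs with hf
    · exact hc f hf
    · exact le_rfl
  -- decoding of `W k'` from `(Q k, A k)` on the support
  have decode : ∀ ω, 0 < p ω → Q k ω = Q k ω0 → A k ω = A k ω0 →
      W k' ω = gC k' (A k ω0) f1 := by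
    intro ω hω hQω hAω
    have hSs : 0 < prob p S (S ω) := lt_of_lt_of_le hω (single_le_prob p hp S ω)
    have ha0' : gA k (Q k ω0) (fun j => W j ω) (S ω) = A k ω0 := by
      rw [← hAω, hgA k ω, hQω]
    have htrip : 0 < prob p (fun ω' => ((fun j => W j ω'), S ω', F ω'))
        ((fun j => W j ω), S ω, f1) := by
      rw [hIndep]
      exact mul_pos (mul_pos (pWpos _) hSs) hf1pos
    obtain ⟨ω', hω'eq, -⟩ := exists_of_prob_pos p hp _ _ htrip
    have hW' : (fun j => W j ω') = (fun j => W j ω) := congrArg Prod.fst hω'eq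
    have hS' : S ω' = S ω := congrArg (fun z => z.2.1) hω'eq
    have hF' : F ω' = f1 := congrArg (fun z => z.2.2) hω'eq
    have hAk' : A k' ω' = gA k' (Q k ω0) (fun j => W j ω) (S ω) := by
      rw [hgA k' ω', hgQ k' ω', hF', hf1q, hW', hS']
    have hgAeq : gA k' (Q k ω0) (fun j => W j ω) (S ω)
        = gA k (Q k ω0) (fun j => W j ω) (S ω) :=
      (factV k k' (Q k ω0) (fun j => W j ω) (S ω) hβk hSs).1
    have hfin : W k' ω' = gC k' (A k ω0) f1 := by
      rw [hgC k' ω', hAk', hgAeq, ha0', hF']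
    exact ((congrFun hW' k').symm.trans hfin)
  -- the adversarial value of the non-queried messages
  have hv1ne : (fun i => gC k' (A k ω0) f1 i + 1) ≠ gC k' (A k ω0) f1 := by
    intro h
    have h2 := congrFun h ⟨0, hL⟩
    simp at h2
  set x0 : {j : Fin K // j ≠ k} → (Fin L → ZMod 2) :=
    fun j => if j.1 = k' then (fun i => gC k' (A k ω0) f1 i + 1) else (fun _ => 0)
    with hx0def
  set w0 : Fin K → (Fin L → ZMod 2) :=
    fun j => if h : j = k then (fun _ => 0) else x0 ⟨j, h⟩ with hw0def
  have hXx0 : 0 < prob p (fun ω => (fun j : {j : Fin K // j ≠ k} => W j.1 ω)) x0 := by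
    have htrip : 0 < prob p (fun ω' => ((fun j => W j ω'), S ω', F ω'))
        (w0, S ω0, F ω0) := by
      rw [hIndep]
      exact mul_pos (mul_pos (pWpos _) hS0)
        (lt_of_lt_of_le hω0 (single_le_prob p hp F ω0))
    obtain ⟨ω1, hω1eq, hω1pos⟩ := exists_of_prob_pos p hp _ _ htrip
    have hW1 : (fun j => W j ω1) = w0 := congrArg Prod.fst hω1eq
    have hXeq : (fun j : {j : Fin K // j ≠ k} => W j.1 ω1) = x0 := by
      funext j
      have h1 : W j.1 ω1 = w0 j.1 := congrFun hW1 j.1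
      rw [h1, hw0def]
      simp only [dif_neg j.2]
    calc (0:ℝ) < p ω1 := hω1pos
    _ ≤ prob p (fun ω => (fun j : {j : Fin K // j ≠ k} => W j.1 ω))
        ((fun j : {j : Fin K // j ≠ k} => W j.1 ω1)) :=
      single_le_prob p hp _ ω1
    _ = prob p (fun ω => (fun j : {j : Fin K // j ≠ k} => W j.1 ω)) x0 := by rw [hXeq]
  have hYy0 : 0 < prob p (fun ω => (Q k ω, A k ω, F ω)) (Q k ω0, A k ω0, F ω0) :=
    lt_of_lt_of_le hω0 (single_le_prob p hp (fun ω => (Q k ω, A k ω, F ω)) ω0)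
  have hjoint0 : prob p (fun ω => ((fun j : {j : Fin K // j ≠ k} => W j.1 ω),
      (Q k ω, A k ω, F ω))) (x0, (Q k ω0, A k ω0, F ω0)) = 0 := by
    refine Finset.sum_eq_zero fun ω _ => ?_
    split_ifs with h
    · by_contra hne
      have hωpos : 0 < p ω := (hp ω).lt_of_ne (Ne.symm hne)
      have hXeq : (fun j : {j : Fin K // j ≠ k} => W j.1 ω) = x0 := congrArg Prod.fst h
      have hQeq : Q k ω = Q k ω0 := congrArg (fun z => z.2.1) h
      have hAeq : A k ω = A k ω0 := congrArg (fun z => z.2.2.1) h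
      have hWdec := decode ω hωpos hQeq hAeq
      have hcontr : gC k' (A k ω0) f1 = fun i => gC k' (A k ω0) f1 i + 1 := by
        calc gC k' (A k ω0) f1 = W k' ω := hWdec.symm
        _ = (fun j : {j : Fin K // j ≠ k} => W j.1 ω) ⟨k', hkk'⟩ := rfl
        _ = x0 ⟨k', hkk'⟩ := congrFun hXeq ⟨k', hkk'⟩
        _ = fun i => gC k' (A k ω0) f1 i + 1 := by
            rw [hx0def]; exact if_pos rfl
      exact hv1ne hcontr.symm
    · rfl
  have hpos := mutInfo_pos p hp hps
      (fun ω => (fun j : {j : Fin K // j ≠ k} => W j.1 ω))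
      (fun ω => (Q k ω, A k ω, F ω)) x0 (Q k ω0, A k ω0, F ω0) hjoint0 hXx0 hYy0
  rw [hDBP k] at hpos
  exact lt_irrefl 0 hpos
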